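/- The eight three-qubit product vectors |δ₀⟩=|0̄⟩|1⟩|+⟩, |δ₁⟩=|0̄⟩|1⟩|−⟩, |δ₂⟩=|+̄⟩|0⟩|1⟩, |δ₃⟩=|−̄⟩|0⟩|1⟩, |δ₄⟩=|1̄⟩|+⟩|0⟩, |δ₅⟩=|1̄⟩|−⟩|0⟩, |δ₆⟩=|0̄⟩|0⟩|0⟩, |δ₇⟩=|1̄⟩|1⟩|1⟩ form an orthonormal basis of (ℂ²)^⊗3. -/

import Mathlib

open Matrix Finset Real
open scoped ComplexOrder Kronecker

noncomputable section

/-- The three-qubit Hilbert space index: bit triples. -/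
abbrev Q3 := Fin 2 × Fin 2 × Fin 2

/-- Inner product `⟨v|w⟩ = ∑ᵢ v(i)* w(i)`. -/
def inn {n : Type*} [Fintype n] (v w : n → ℂ) : ℂ := ∑ i, star (v i) * w i

/-- Rank-one projector `|v⟩⟨v|`. -/
def proj {n : Type*} (v : n → ℂ) : Matrix n n ℂ := Matrix.vecMulVec v (star v)

/-- Product vector `|a⟩⊗|b⟩⊗|c⟩` on three qubits. -/
def prod3 (a b c : Fin 2 → ℂ) : Q3 → ℂ := fun x => a x.1 * b x.2.1 * c x.2.2

def ket0 : Fin 2 → ℂ := ![1, 0]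
def ket1 : Fin 2 → ℂ := ![0, 1]
def ketP : Fin 2 → ℂ := ![(1 / Real.sqrt 2 : ℝ), (1 / Real.sqrt 2 : ℝ)]
def ketM : Fin 2 → ℂ := ![(1 / Real.sqrt 2 : ℝ), (-(1 / Real.sqrt 2) : ℝ)]
/-- `|0̄⟩ = cos(π/8)|0⟩ + sin(π/8)|1⟩`. -/
def ket0b : Fin 2 → ℂ := ![(Real.cos (π / 8) : ℝ), (Real.sin (π / 8) : ℝ)]
/-- `|1̄⟩ = -sin(π/8)|0⟩ + cos(π/8)|1⟩`. -/
def ket1b : Fin 2 → ℂ := ![(-Real.sin (π / 8) : ℝ), (Real.cos (π / 8) : ℝ)]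
/-- `|+̄⟩ = sin(π/8)|0⟩ + cos(π/8)|1⟩`. -/
def ketPb : Fin 2 → ℂ := ![(Real.sin (π / 8) : ℝ), (Real.cos (π / 8) : ℝ)]
/-- `|−̄⟩ = cos(π/8)|0⟩ - sin(π/8)|1⟩`. -/
def ketMb : Fin 2 → ℂ := ![(Real.cos (π / 8) : ℝ), (-Real.sin (π / 8) : ℝ)]

/-- The four vectors of the Shifts-type unextendible product basis. -/
def tau : Fin 4 → Q3 → ℂ
  | 0 => prod3 ket0b ket1 ketP
  | 1 => prod3 ketPb ket0 ket1
  | 2 => prod3 ket1b ketP ket0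
  | 3 => prod3 ketMb ketM ketM

/-- Pauli X. -/
def PX : Matrix (Fin 2) (Fin 2) ℂ := !![0, 1; 1, 0]
/-- Pauli Y. -/
def PY : Matrix (Fin 2) (Fin 2) ℂ := !![0, -Complex.I; Complex.I, 0]
/-- Pauli Z. -/
def PZ : Matrix (Fin 2) (Fin 2) ℂ := !![1, 0; 0, -1]

/-- The eight product vectors of the three-qubit basis exhibiting nonlocality
without entanglement. -/
def delta : Fin 8 → Q3 → ℂ
  | 0 => prod3 ket0b ket1 ketP
  | 1 => prod3 ket0b ket1 ketM
  | 2 => prod3 ketPb ket0 ket1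
  | 3 => prod3 ketMb ket0 ket1
  | 4 => prod3 ket1b ketP ket0
  | 5 => prod3 ket1b ketM ket0
  | 6 => prod3 ket0b ket0 ket0
  | 7 => prod3 ket1b ket1 ket1

lemma inn_prod3 (a b c a' b' c' : Fin 2 → ℂ) :
    inn (prod3 a b c) (prod3 a' b' c') = inn a a' * inn b b' * inn c c' := by
  simp only [inn, prod3, Fintype.sum_prod_type, star_mul']
  simp [Finset.sum_mul, Finset.mul_sum]
  ring_nf

lemma h00 : inn ket0 ket0 = 1 := by simp [inn, Fin.sum_univ_two, ket0]
lemma h11 : inn ket1 ket1 = 1 := by simp [inn, Fin.sum_univ_two, ket1]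
lemma h01 : inn ket0 ket1 = 0 := by simp [inn, Fin.sum_univ_two, ket0, ket1]
lemma h10 : inn ket1 ket0 = 0 := by simp [inn, Fin.sum_univ_two, ket0, ket1]
lemma hPP : inn ketP ketP = 1 := by
  simp only [inn, Fin.sum_univ_two, ketP, Matrix.cons_val_zero, Matrix.cons_val_one,
    Matrix.head_cons, Complex.star_def, Complex.conj_ofReal, ← Complex.ofReal_mul,
    ← Complex.ofReal_add]
  norm_cast
  rw [div_mul_div_comm, Real.mul_self_sqrt (by norm_num)]
  norm_num
lemma hMM : inn ketM ketM = 1 := by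
  simp only [inn, Fin.sum_univ_two, ketM, Matrix.cons_val_zero, Matrix.cons_val_one,
    Matrix.head_cons, Complex.star_def, Complex.conj_ofReal, ← Complex.ofReal_mul,
    ← Complex.ofReal_add]
  norm_cast
  rw [neg_mul_neg, div_mul_div_comm, Real.mul_self_sqrt (by norm_num)]
  norm_num
lemma hPM : inn ketP ketM = 0 := by
  simp only [inn, Fin.sum_univ_two, ketP, ketM, Matrix.cons_val_zero, Matrix.cons_val_one,
    Matrix.head_cons, Complex.star_def, Complex.conj_ofReal]
  push_cast
  ring
lemma hMP : inn ketM ketP = 0 := by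
  simp only [inn, Fin.sum_univ_two, ketP, ketM, Matrix.cons_val_zero, Matrix.cons_val_one,
    Matrix.head_cons, Complex.star_def, Complex.conj_ofReal]
  push_cast
  ring
lemma h0b0b : inn ket0b ket0b = 1 := by
  simp only [inn, Fin.sum_univ_two, ket0b, Matrix.cons_val_zero, Matrix.cons_val_one,
    Matrix.head_cons, Complex.star_def, Complex.conj_ofReal, ← Complex.ofReal_mul,
    ← Complex.ofReal_add]
  norm_cast
  nlinarith [Real.sin_sq_add_cos_sq (π/8)]
lemma h1b1b : inn ket1b ket1b = 1 := by
  simp only [inn, Fin.sum_univ_two, ket1b, Matrix.cons_val_zero, Matrix.cons_val_one,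
    Matrix.head_cons, Complex.star_def, Complex.conj_ofReal, ← Complex.ofReal_mul,
    ← Complex.ofReal_add]
  norm_cast
  nlinarith [Real.sin_sq_add_cos_sq (π/8)]
lemma hPbPb : inn ketPb ketPb = 1 := by
  simp only [inn, Fin.sum_univ_two, ketPb, Matrix.cons_val_zero, Matrix.cons_val_one,
    Matrix.head_cons, Complex.star_def, Complex.conj_ofReal, ← Complex.ofReal_mul,
    ← Complex.ofReal_add]
  norm_cast
  nlinarith [Real.sin_sq_add_cos_sq (π/8)]
lemma hMbMb : inn ketMb ketMb = 1 := by
  simp only [inn, Fin.sum_univ_two, ketMb, Matrix.cons_val_zero, Matrix.cons_val_one,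
    Matrix.head_cons, Complex.star_def, Complex.conj_ofReal, ← Complex.ofReal_mul,
    ← Complex.ofReal_add]
  norm_cast
  nlinarith [Real.sin_sq_add_cos_sq (π/8)]
lemma h0b1b : inn ket0b ket1b = 0 := by
  simp only [inn, Fin.sum_univ_two, ket0b, ket1b, Matrix.cons_val_zero, Matrix.cons_val_one,
    Matrix.head_cons, Complex.star_def, Complex.conj_ofReal]
  push_cast
  ring
lemma h1b0b : inn ket1b ket0b = 0 := by
  simp only [inn, Fin.sum_univ_two, ket0b, ket1b, Matrix.cons_val_zero, Matrix.cons_val_one,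
    Matrix.head_cons, Complex.star_def, Complex.conj_ofReal]
  push_cast
  ring
lemma hPbMb : inn ketPb ketMb = 0 := by
  simp only [inn, Fin.sum_univ_two, ketPb, ketMb, Matrix.cons_val_zero, Matrix.cons_val_one,
    Matrix.head_cons, Complex.star_def, Complex.conj_ofReal]
  push_cast
  ring
lemma hMbPb : inn ketMb ketPb = 0 := by
  simp only [inn, Fin.sum_univ_two, ketPb, ketMb, Matrix.cons_val_zero, Matrix.cons_val_one,
    Matrix.head_cons, Complex.star_def, Complex.conj_ofReal]
  push_cast
  ring

lemma delta_ortho (i j : Fin 8) : inn (delta i) (delta j) = if i = j then 1 else 0 := by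
  fin_cases i <;> fin_cases j <;>
    simp [delta, inn_prod3, h00, h11, h01, h10, hPP, hMM, hPM, hMP,
      h0b0b, h1b1b, hPbPb, hMbMb, h0b1b, h1b0b, hPbMb, hMbPb]

/-- The eight vectors `|δ₀⟩,…,|δ₇⟩` form an orthonormal basis of `(ℂ²)^⊗3`. -/
theorem stmt_2 :
    (∀ i j : Fin 8, inn (delta i) (delta j) = if i = j then 1 else 0) ∧
      Submodule.span ℂ (Set.range delta) = ⊤ := by
  refine ⟨delta_ortho, ?_⟩
  let f : Fin 8 → EuclideanSpace ℂ Q3 := fun i => WithLp.toLp 2 (delta i)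
  have hortho : Orthonormal ℂ f := by
    rw [orthonormal_iff_ite]
    intro i j
    have := delta_ortho i j
    simpa [f, PiLp.inner_apply, RCLike.inner_apply, inn, mul_comm] using this
  have hspan : Submodule.span ℂ (Set.range f) = ⊤ := by
    refine hortho.linearIndependent.span_eq_top_of_card_eq_finrank ?_
    simp [finrank_euclideanSpace]
  have := congrArg (Submodule.map (WithLp.linearEquiv 2 ℂ (Q3 → ℂ)).toLinearMap) hspan
  rw [Submodule.map_span, ← Set.range_comp, Submodule.map_top, LinearEquiv.range] at this
  exact this
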